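/- If an n-partite orthogonal product basis S of ℂ^{d₁}⊗...⊗ℂ^{dₙ} is A₁-reducible with respect to the partition at index k, i.e., S = {|a_i⟩⊗T_i-states} where |a_i⟩ ⊥ |a_j⟩ for all i ∈ [1,k], j ∈ [k+1,d₁], then the subset S₀ of states whose first factor lies in span{|a₁⟩,...,|a_k⟩} is an orthogonal product basis of span{|a₁⟩,...,|a_k⟩} ⊗ ℂ^{d₂} ⊗ ... ⊗ ℂ^{dₙ}; equivalently, S₀ is obtained from S by the local projection onto span{|a₁⟩,...,|a_k⟩} on the first system, and S is the disjoint union of the two OPBs S₀ and S \ S₀. -/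

import Mathlib

open scoped ComplexInnerProductSpace Matrix
noncomputable section
/-- The state space of an `n`-partite system with local dimensions `d i`,
modelling `ℂ^{d 0} ⊗ ... ⊗ ℂ^{d (n-1)}`. -/
abbrev GState {n : ℕ} (d : Fin n → ℕ) := EuclideanSpace ℂ (∀ i, Fin (d i))
/-- The product state `v 0 ⊗ v 1 ⊗ ... ⊗ v (n-1)`. -/
def prodState {n : ℕ} (d : Fin n → ℕ) (v : ∀ i, EuclideanSpace ℂ (Fin (d i))) : GState d :=
  WithLp.toLp 2 fun x => ∏ i, v i (x i)
/-- A family of product states (given by their local factors `a j`) is reducible at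
party `p` if the states split into two nonempty groups whose `p`-th factors are
mutually orthogonal. -/
def ReducibleAt {n : ℕ} {d : Fin n → ℕ} {J : Type}
    (a : J → ∀ i, EuclideanSpace ℂ (Fin (d i))) (p : Fin n) : Prop :=
  ∃ T : Set J, T.Nonempty ∧ Tᶜ.Nonempty ∧ ∀ j ∈ T, ∀ k ∈ Tᶜ, ⟪a j p, a k p⟫ = 0


lemma inner_prodState {n : ℕ} (d : Fin n → ℕ) (v w : ∀ i, EuclideanSpace ℂ (Fin (d i))) :
    ⟪prodState d v, prodState d w⟫ = ∏ i, ⟪v i, w i⟫ := by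
  classical
  simp only [prodState, PiLp.inner_apply, PiLp.toLp_apply, RCLike.inner_apply]
  rw [Fintype.prod_sum]
  congr 1
  ext x
  rw [map_prod, Finset.prod_mul_distrib]

lemma aux_split
    {n : ℕ} {d : Fin (n + 1) → ℕ}
    (a : Fin (∏ i, d i) → ∀ i, EuclideanSpace ℂ (Fin (d i)))
    (horth : ∀ j k, j ≠ k → ⟪prodState d (a j), prodState d (a k)⟫ = 0)
    (hspan : Submodule.span ℂ (Set.range fun j => prodState d (a j)) = ⊤)
    (T : Set (Fin (∏ i, d i)))
    (hred : ∀ j ∈ T, ∀ k ∈ Tᶜ, ⟪a j 0, a k 0⟫ = 0) :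
    Submodule.span ℂ {w : GState d | ∃ j ∈ T, w = prodState d (a j)} =
      Submodule.span ℂ {w : GState d |
        ∃ u ∈ Submodule.span ℂ {x : EuclideanSpace ℂ (Fin (d 0)) | ∃ j ∈ T, x = a j 0},
          ∃ v : ∀ i : Fin n, EuclideanSpace ℂ (Fin (d i.succ)),
            w = prodState d (Fin.cons u v)} := by
  set P := Submodule.span ℂ {w : GState d | ∃ j ∈ T, w = prodState d (a j)} with hP
  set Q := Submodule.span ℂ {w : GState d | ∃ j ∈ Tᶜ, w = prodState d (a j)} with hQ
  -- P ⊥ Q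
  have hPQ : P ⟂ Q := by
    rw [hP, hQ, Submodule.isOrtho_span]
    rintro u ⟨j, hj, rfl⟩ v ⟨k, hk, rfl⟩
    exact horth j k (fun h => hk (h ▸ hj))
  -- P ⊔ Q = ⊤
  have hsup : P ⊔ Q = ⊤ := by
    rw [hP, hQ, ← Submodule.span_union, ← top_le_iff, ← hspan]
    apply Submodule.span_mono
    rintro w ⟨j, rfl⟩
    by_cases hj : j ∈ T
    · exact Or.inl ⟨j, hj, rfl⟩
    · exact Or.inr ⟨j, hj, rfl⟩
  -- Pᗮ = Q
  have hQle : Q ≤ Pᗮ := Submodule.isOrtho_iff_le.mp hPQ.symm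
  have hPorth : Pᗮ = Q := by
    refine le_antisymm ?_ hQle
    intro x hx
    have : x ∈ P ⊔ Q := hsup ▸ Submodule.mem_top
    obtain ⟨y, hy, z, hz, rfl⟩ := Submodule.mem_sup.mp this
    have hy' : y ∈ Pᗮ := by
      have := Pᗮ.sub_mem hx (hQle hz)
      simpa using this
    have : y = 0 := by
      have := P.inf_orthogonal_eq_bot
      have hmem : y ∈ P ⊓ Pᗮ := ⟨hy, hy'⟩
      rw [this, Submodule.mem_bot] at hmem
      exact hmem
    simp [this, hz]
  apply le_antisymm
  · -- easy direction
    apply Submodule.span_mono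
    rintro w ⟨j, hj, rfl⟩
    refine ⟨a j 0, Submodule.subset_span ⟨j, hj, rfl⟩, Fin.tail (a j), ?_⟩
    rw [Fin.cons_self_tail]
  · -- hard direction
    rw [Submodule.span_le]
    rintro w ⟨u, hu, v, rfl⟩
    have hwQ : prodState d (Fin.cons u v) ∈ Qᗮ := by
      have : Submodule.span ℂ {w : GState d | ∃ j ∈ Tᶜ, w = prodState d (a j)}
          ⟂ Submodule.span ℂ {prodState d (Fin.cons u v)} := by
        rw [Submodule.isOrtho_span]
        rintro x ⟨k, hk, rfl⟩ y hy
        rw [Set.mem_singleton_iff] at hy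
        subst hy
        rw [inner_prodState, Fin.prod_univ_succ]
        have hu0 : ⟪a k 0, u⟫ = 0 := by
          have hK : Submodule.span ℂ {x : EuclideanSpace ℂ (Fin (d 0)) | ∃ j ∈ T, x = a j 0}
              ⟂ Submodule.span ℂ {a k 0} := by
            rw [Submodule.isOrtho_span]
            rintro x ⟨j, hj, rfl⟩ y hy
            rw [Set.mem_singleton_iff] at hy
            subst hy
            exact hred j hj k hk
          have := Submodule.isOrtho_iff_le.mp hK hu
          rw [Submodule.mem_orthogonal] at this
          exact this _ (Submodule.mem_span_singleton_self _)
        simp [Fin.cons_zero, hu0]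
      exact Submodule.isOrtho_iff_le.mp this.symm
        (Submodule.mem_span_singleton_self (prodState d (Fin.cons u v)))
    rwa [← hPorth, Submodule.orthogonal_orthogonal] at hwQ

/-- If an OPB is `A₁`-reducible via the index split `T` (first factors
across the split are orthogonal), then the states with indices in `T` span exactly
`K ⊗ ℂ^{d₂} ⊗ ... ⊗ ℂ^{dₙ}` where `K = span{first factors over T}`, and likewise for
the complementary set; i.e. the OPB is the disjoint union of two OPBs of the two
orthogonal subspaces, each obtained by the local projection onto `K` resp. `K^⊥`. -/
theorem reducible_OPB_splits
    {n : ℕ} {d : Fin (n + 1) → ℕ}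
    (a : Fin (∏ i, d i) → ∀ i, EuclideanSpace ℂ (Fin (d i)))
    (hnz : ∀ j i, a j i ≠ 0)
    (horth : ∀ j k, j ≠ k → ⟪prodState d (a j), prodState d (a k)⟫ = 0)
    (hspan : Submodule.span ℂ (Set.range fun j => prodState d (a j)) = ⊤)
    (T : Set (Fin (∏ i, d i))) (hT : T.Nonempty) (hTc : Tᶜ.Nonempty)
    (hred : ∀ j ∈ T, ∀ k ∈ Tᶜ, ⟪a j 0, a k 0⟫ = 0) :
    Submodule.span ℂ {w : GState d | ∃ j ∈ T, w = prodState d (a j)} =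
      Submodule.span ℂ {w : GState d |
        ∃ u ∈ Submodule.span ℂ {x : EuclideanSpace ℂ (Fin (d 0)) | ∃ j ∈ T, x = a j 0},
          ∃ v : ∀ i : Fin n, EuclideanSpace ℂ (Fin (d i.succ)),
            w = prodState d (Fin.cons u v)} ∧
    Submodule.span ℂ {w : GState d | ∃ j ∈ Tᶜ, w = prodState d (a j)} =
      Submodule.span ℂ {w : GState d |
        ∃ u ∈ Submodule.span ℂ
            {x : EuclideanSpace ℂ (Fin (d 0)) | ∃ j ∈ Tᶜ, x = a j 0},
          ∃ v : ∀ i : Fin n, EuclideanSpace ℂ (Fin (d i.succ)),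
            w = prodState d (Fin.cons u v)} := by
  constructor
  · exact aux_split a horth hspan T hred
  · refine aux_split a horth hspan Tᶜ ?_
    intro j hj k hk
    rw [compl_compl] at hk
    exact inner_eq_zero_symm.mp (hred k hk j hj)
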